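/- arXiv:1101.3756 — 4 statements merged into one kernel-verified Lean document; each statement's English description precedes it below -/
import Mathlib

section
/- Let f : ℂ \ {-1,1} → ℂ be defined by f(z) = z/(√(z+1)·√(z-1)), using the principal branch of the complex square root. Then f restricted to ℂ \ [-1,1] is even: for every z ∈ ℂ with z ∉ [-1,1] (the real segment), f(-z) = f(z). -/
open Complex Real

noncomputable def csqrt (w : ℂ) : ℂ := w ^ ((1 : ℂ) / 2)

noncomputable def f (z : ℂ) : ℂ := z / (csqrt (z + 1) * csqrt (z - 1))

lemma csqrt_eq {w : ℂ} (hw : w ≠ 0) : csqrt w = Complex.exp (Complex.log w * (1/2)) := by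
  rw [csqrt, Complex.cpow_def_of_ne_zero hw]

lemma expPiHalf : Complex.exp ((π : ℂ) * I * (1/2)) = I := by
  rw [show (π:ℂ)*I*(1/2) = (π/2:ℝ)*I by push_cast; ring, Complex.exp_mul_I]
  simp

lemma csqrt_neg_of_im_pos {w : ℂ} (h : 0 < w.im) : csqrt (-w) = -I * csqrt w := by
  have hw : w ≠ 0 := by intro h0; simp [h0] at h
  have hlog : Complex.log (-w) = Complex.log w - π * I := by
    rw [Complex.log, Complex.log, norm_neg, Complex.arg_neg_eq_arg_sub_pi_of_im_pos h]
    push_cast; ring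
  rw [csqrt_eq (neg_ne_zero.mpr hw), csqrt_eq hw, hlog, sub_mul, Complex.exp_sub, expPiHalf]
  rw [div_eq_mul_inv, Complex.inv_I]; ring

lemma csqrt_neg_of_im_neg {w : ℂ} (h : w.im < 0) : csqrt (-w) = I * csqrt w := by
  have hw : w ≠ 0 := by intro h0; simp [h0] at h
  have hlog : Complex.log (-w) = Complex.log w + π * I := by
    rw [Complex.log, Complex.log, norm_neg, Complex.arg_neg_eq_arg_add_pi_of_im_neg h]
    push_cast; ring
  rw [csqrt_eq (neg_ne_zero.mpr hw), csqrt_eq hw, hlog, add_mul, Complex.exp_add, expPiHalf]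
  ring

lemma csqrt_neg_real {w : ℂ} (h1 : w.im = 0) (h2 : w.re < 0) : csqrt w = I * csqrt (-w) := by
  have hw : w ≠ 0 := by intro h0; simp [h0] at h2
  have harg : Complex.arg w = π := Complex.arg_eq_pi_iff.mpr ⟨h2, h1⟩
  have harg' : Complex.arg (-w) = 0 := by
    rw [Complex.arg_eq_zero_iff]
    constructor
    · simpa using h2.le
    · simpa using h1
  have hlog : Complex.log w = Complex.log (-w) + π * I := by
    rw [Complex.log, Complex.log, norm_neg, harg, harg']
    push_cast; ring
  rw [csqrt_eq hw, csqrt_eq (neg_ne_zero.mpr hw), hlog, add_mul, Complex.exp_add, expPiHalf]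
  ring

/-- f restricted to ℂ \ [-1,1] is even. -/
theorem f_even_off_segment (z : ℂ)
    (hz : ¬ (z.im = 0 ∧ z.re ∈ Set.Icc (-1 : ℝ) 1)) :
    f (-z) = f z := by
  have key : csqrt (-z + 1) * csqrt (-z - 1) = - (csqrt (z + 1) * csqrt (z - 1)) := by
    rcases lt_trichotomy z.im 0 with him | him | him
    · have h1 : (z + 1).im < 0 := by simpa using him
      have h2 : (z - 1).im < 0 := by simpa using him
      have e1 : (-z + 1 : ℂ) = -(z - 1) := by ring
      have e2 : (-z - 1 : ℂ) = -(z + 1) := by ring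
      rw [e1, e2, csqrt_neg_of_im_neg h2, csqrt_neg_of_im_neg h1]
      have : I * I = -1 := Complex.I_mul_I
      ring_nf
      rw [Complex.I_sq]; ring
    · rcases lt_or_ge (1:ℝ) z.re with hre | hre
      · have h1 : (z - 1).im = 0 := by simp [him]
        have h2 : (z - 1).re > 0 := by simp [hre]
        have h3 : (z + 1).im = 0 := by simp [him]
        have h4 : (z + 1).re > 0 := by simp; linarith
        have e1 : (-z + 1 : ℂ) = -(z - 1) := by ring
        have e2 : (-z - 1 : ℂ) = -(z + 1) := by ring
        have c1 : csqrt (-(z-1)) = I * csqrt (z-1) := by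
          have := csqrt_neg_real (w := -(z-1)) (by simp [him]) (by simp; linarith)
          simpa using this
        have c2 : csqrt (-(z+1)) = I * csqrt (z+1) := by
          have := csqrt_neg_real (w := -(z+1)) (by simp [him]) (by simp; linarith)
          simpa using this
        rw [e1, e2, c1, c2]
        ring_nf
        rw [Complex.I_sq]; ring
      · have hre' : z.re < -1 := by
          rcases lt_or_ge z.re (-1:ℝ) with h | h
          · exact h
          · exact absurd ⟨him, h, hre⟩ hz
        have c1 : csqrt (z - 1) = I * csqrt (-(z-1)) :=
          csqrt_neg_real (by simp [him]) (by simp; linarith)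
        have c2 : csqrt (z + 1) = I * csqrt (-(z+1)) :=
          csqrt_neg_real (by simp [him]) (by simp; linarith)
        have e1 : (-z + 1 : ℂ) = -(z - 1) := by ring
        have e2 : (-z - 1 : ℂ) = -(z + 1) := by ring
        rw [e1, e2, c1, c2]
        ring_nf
        rw [Complex.I_sq]; ring
    · have h1 : (z + 1).im > 0 := by simpa using him
      have h2 : (z - 1).im > 0 := by simpa using him
      have e1 : (-z + 1 : ℂ) = -(z - 1) := by ring
      have e2 : (-z - 1 : ℂ) = -(z + 1) := by ring
      rw [e1, e2, csqrt_neg_of_im_pos h2, csqrt_neg_of_im_pos h1]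
      ring_nf
      rw [Complex.I_sq]; ring
  rw [f, f, key, neg_div_neg_eq]
end

section
/- For every z ∈ ℂ with z ∉ [-1,1] (the closed real segment from -1 to 1), the real part of z/(√(z+1)·√(z-1)) is strictly positive. -/
lemma csqrt_re (w : ℂ) (hw : w ≠ 0) :
    (csqrt w).re = Real.exp (Real.log (‖w‖) / 2) * Real.cos (w.arg / 2) := by
  rw [csqrt, Complex.cpow_def_of_ne_zero hw, Complex.exp_re]
  have h1 : (Complex.log w * (1 / 2)).re = Real.log (‖w‖) / 2 := by
    simp [Complex.mul_re, Complex.log_re, Complex.log_im]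
    ring
  have h2 : (Complex.log w * (1 / 2)).im = w.arg / 2 := by
    simp [Complex.mul_im, Complex.log_re, Complex.log_im]
    ring
  rw [h1, h2]

lemma csqrt_im (w : ℂ) (hw : w ≠ 0) :
    (csqrt w).im = Real.exp (Real.log (‖w‖) / 2) * Real.sin (w.arg / 2) := by
  rw [csqrt, Complex.cpow_def_of_ne_zero hw, Complex.exp_im]
  have h1 : (Complex.log w * (1 / 2)).re = Real.log (‖w‖) / 2 := by
    simp [Complex.mul_re, Complex.log_re, Complex.log_im]
    ring
  have h2 : (Complex.log w * (1 / 2)).im = w.arg / 2 := by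
    simp [Complex.mul_im, Complex.log_re, Complex.log_im]
    ring
  rw [h1, h2]

lemma csqrt_sq (w : ℂ) (hw : w ≠ 0) : csqrt w ^ 2 = w := by
  rw [csqrt, sq, ← Complex.cpow_add _ _ hw]
  norm_num

theorem re_f_pos (z : ℂ)
    (hz : ¬ (z.im = 0 ∧ z.re ∈ Set.Icc (-1 : ℝ) 1)) :
    0 < (f z).re := by
  have h1 : z + 1 ≠ 0 := by
    intro h
    have hz1 : z = -1 := by linear_combination h
    subst hz1
    exact hz ⟨by simp, by simp⟩
  have h2 : z - 1 ≠ 0 := by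
    intro h
    have hz1 : z = 1 := by linear_combination h
    subst hz1
    exact hz ⟨by simp, by simp⟩
  set a := csqrt (z + 1) with ha
  set b := csqrt (z - 1) with hb
  have ha2 : a ^ 2 = z + 1 := csqrt_sq _ h1
  have hb2 : b ^ 2 = z - 1 := csqrt_sq _ h2
  have ha0 : a ≠ 0 := by
    intro h; rw [h] at ha2; simp at ha2; exact h1 ha2.symm
  have hb0 : b ≠ 0 := by
    intro h; rw [h] at hb2; simp at hb2; exact h2 hb2.symm
  -- key positivity: 0 < a.re * b.re + a.im * b.im
  have hargd : (z + 1).arg - (z - 1).arg ∈ Set.Ioo (-Real.pi) Real.pi := by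
    by_cases him : z.im = 0
    · have hre : z.re < -1 ∨ 1 < z.re := by
        rcases lt_or_ge z.re (-1) with h | h
        · exact Or.inl h
        rcases le_or_gt z.re 1 with h' | h'
        · exact absurd ⟨him, h, h'⟩ hz
        · exact Or.inr h'
      have e1 : (z + 1).im = 0 := by simp [him]
      have e2 : (z - 1).im = 0 := by simp [him]
      rcases hre with h | h
      · have a1 : (z + 1).arg = Real.pi := Complex.arg_eq_pi_iff.2 ⟨by simp; linarith, e1⟩
        have a2 : (z - 1).arg = Real.pi := Complex.arg_eq_pi_iff.2 ⟨by simp; linarith, e2⟩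
        rw [a1, a2]
        constructor <;> simp [Real.pi_pos]
      · have a1 : (z + 1).arg = 0 := Complex.arg_eq_zero_iff.2 ⟨by simp; linarith, e1⟩
        have a2 : (z - 1).arg = 0 := Complex.arg_eq_zero_iff.2 ⟨by simp; linarith, e2⟩
        rw [a1, a2]
        constructor <;> simp [Real.pi_pos]
    · rcases lt_or_gt_of_ne him with h | h
      · -- im z < 0 : both args in (-π, 0)
        have a1 : (z + 1).arg < 0 := Complex.arg_neg_iff.2 (by simp [h])
        have a2 : (z - 1).arg < 0 := Complex.arg_neg_iff.2 (by simp [h])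
        have b1 := Complex.neg_pi_lt_arg (z + 1)
        have b2 := Complex.neg_pi_lt_arg (z - 1)
        constructor <;> [linarith; linarith]
      · -- im z > 0 : both args in (0, π)
        have a1 : 0 < (z + 1).arg := by
          by_contra hc
          push_neg at hc
          have := Complex.arg_nonneg_iff.2 (le_of_lt (show (0:ℝ) < (z+1).im by simp [h]))
          have : (z + 1).arg = 0 := le_antisymm hc this
          rcases Complex.arg_eq_zero_iff.1 this with ⟨_, hi⟩
          simp [h.ne'] at hi
        have a2 : 0 < (z - 1).arg := by
          by_contra hc
          push_neg at hc
          have := Complex.arg_nonneg_iff.2 (le_of_lt (show (0:ℝ) < (z-1).im by simp [h]))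
          have : (z - 1).arg = 0 := le_antisymm hc this
          rcases Complex.arg_eq_zero_iff.1 this with ⟨_, hi⟩
          simp [h.ne'] at hi
        have b1 : (z + 1).arg < Real.pi :=
          Complex.arg_lt_pi_iff.2 (Or.inr (by simp [h.ne']))
        have b2 : (z - 1).arg < Real.pi :=
          Complex.arg_lt_pi_iff.2 (Or.inr (by simp [h.ne']))
        constructor <;> [linarith; linarith]
  have key : 0 < a.re * b.re + a.im * b.im := by
    rw [ha, hb, csqrt_re _ h1, csqrt_im _ h1, csqrt_re _ h2, csqrt_im _ h2]
    have hc : 0 < Real.cos (((z + 1).arg - (z - 1).arg) / 2) := by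
      apply Real.cos_pos_of_mem_Ioo
      obtain ⟨l, r⟩ := hargd
      constructor <;> [linarith; linarith]
    have hE1 : 0 < Real.exp (Real.log (‖z + 1‖) / 2) := Real.exp_pos _
    have hE2 : 0 < Real.exp (Real.log (‖z - 1‖) / 2) := Real.exp_pos _
    have : Real.exp (Real.log (‖z + 1‖) / 2) * Real.cos ((z + 1).arg / 2) *
        (Real.exp (Real.log (‖z - 1‖) / 2) * Real.cos ((z - 1).arg / 2)) +
        Real.exp (Real.log (‖z + 1‖) / 2) * Real.sin ((z + 1).arg / 2) *
        (Real.exp (Real.log (‖z - 1‖) / 2) * Real.sin ((z - 1).arg / 2)) =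
        Real.exp (Real.log (‖z + 1‖) / 2) *
        Real.exp (Real.log (‖z - 1‖) / 2) *
        Real.cos (((z + 1).arg - (z - 1).arg) / 2) := by
      rw [show ((z + 1).arg - (z - 1).arg) / 2 = (z + 1).arg / 2 - (z - 1).arg / 2 by ring,
        Real.cos_sub]
      ring
    rw [this]
    positivity
  -- now compute re of f
  have hzre : 2 * z.re = a.re ^ 2 - a.im ^ 2 + b.re ^ 2 - b.im ^ 2 := by
    have h : a ^ 2 + b ^ 2 = 2 * z := by rw [ha2, hb2]; ring
    have := congrArg Complex.re h
    simp [sq, Complex.mul_re, Complex.add_re] at this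
    linarith [this]
  have hzim : z.im = a.re * a.im + b.re * b.im := by
    have h : a ^ 2 + b ^ 2 = 2 * z := by rw [ha2, hb2]; ring
    have := congrArg Complex.im h
    simp [sq, Complex.mul_im, Complex.add_im] at this
    linarith [this]
  have hns : 0 < Complex.normSq (a * b) :=
    Complex.normSq_pos.2 (mul_ne_zero ha0 hb0)
  have hA : 0 < a.re ^ 2 + a.im ^ 2 := by
    have : a.re ≠ 0 ∨ a.im ≠ 0 := by
      by_contra hc; push_neg at hc
      exact ha0 (Complex.ext hc.1 hc.2)
    rcases this with h | h <;> positivity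
  have hB : 0 ≤ b.re ^ 2 + b.im ^ 2 := by positivity
  rw [f, Complex.div_re]
  rw [← add_div]
  apply div_pos _ hns
  have hre : z.re = (a.re ^ 2 - a.im ^ 2 + b.re ^ 2 - b.im ^ 2) / 2 := by linarith
  rw [hre, hzim, Complex.mul_re, Complex.mul_im]
  nlinarith [key, hA, hB, mul_pos hA key]
end

section
/- The function f(z) = z/(√(z+1)·√(z-1)) is complex-differentiable on ℂ \ [-1,1] with derivative f'(z) = -(z+1)^{-3/2}·(z-1)^{-3/2} (principal branches), and this derivative is nowhere zero on ℂ \ [-1,1]. -/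
lemma log_mul_cut {a b : ℂ} (ha : a.re < 0) (hb : b.re < 0) (hab : a.im = b.im) :
    ∃ s : ℝ, (s = 2*Real.pi ∨ s = -(2*Real.pi)) ∧
      Complex.log (a*b) = Complex.log a + Complex.log b - (s:ℂ)*Complex.I := by
  have ha0 : a ≠ 0 := fun h => by simp [h] at ha
  have hb0 : b ≠ 0 := fun h => by simp [h] at hb
  have hπ := Real.pi_pos
  rcases le_or_gt 0 a.im with him | him
  · have himb : 0 ≤ b.im := hab ▸ him
    have h1 : Real.pi/2 < a.arg := by
      have hne : a.arg ≠ Real.pi/2 := by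
        intro h
        obtain ⟨h', -⟩ := Complex.arg_eq_pi_div_two_iff.1 h
        linarith
      have hle : ¬ a.arg < Real.pi/2 := by
        rw [Complex.arg_lt_pi_div_two_iff]; push_neg
        exact ⟨ha.le, him, ha0⟩
      exact lt_of_le_of_ne (not_lt.1 hle) (Ne.symm hne)
    have h1b : Real.pi/2 < b.arg := by
      have hne : b.arg ≠ Real.pi/2 := by
        intro h
        obtain ⟨h', -⟩ := Complex.arg_eq_pi_div_two_iff.1 h
        linarith
      have hle : ¬ b.arg < Real.pi/2 := by
        rw [Complex.arg_lt_pi_div_two_iff]; push_neg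
        exact ⟨hb.le, himb, hb0⟩
      exact lt_of_le_of_ne (not_lt.1 hle) (Ne.symm hne)
    have h2 := Complex.arg_le_pi a
    have h2b := Complex.arg_le_pi b
    refine ⟨2*Real.pi, Or.inl rfl, ?_⟩
    have key : a*b = Complex.exp (Complex.log a + Complex.log b - ((2*Real.pi : ℝ):ℂ)*Complex.I) := by
      rw [Complex.exp_sub, Complex.exp_add, Complex.exp_log ha0, Complex.exp_log hb0]
      have h3 : Complex.exp (((2*Real.pi : ℝ):ℂ)*Complex.I) = 1 := by
        push_cast; exact Complex.exp_two_pi_mul_I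
      rw [h3, div_one]
    rw [key, Complex.log_exp] <;>
      simp only [Complex.sub_im, Complex.add_im, Complex.log_im, Complex.mul_im,
        Complex.ofReal_re, Complex.ofReal_im, Complex.I_im, Complex.I_re,
        mul_one, mul_zero, zero_mul, add_zero, sub_zero, zero_add] <;>
      linarith
  · have himb : b.im < 0 := hab ▸ him
    have h1 : a.arg ≤ -(Real.pi/2) := by
      rw [← not_lt, Complex.neg_pi_div_two_lt_arg_iff]; push_neg
      exact ⟨ha.le, him⟩
    have h1b : b.arg ≤ -(Real.pi/2) := by
      rw [← not_lt, Complex.neg_pi_div_two_lt_arg_iff]; push_neg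
      exact ⟨hb.le, himb⟩
    have h2 := Complex.neg_pi_lt_arg a
    have h2b := Complex.neg_pi_lt_arg b
    refine ⟨-(2*Real.pi), Or.inr rfl, ?_⟩
    have key : a*b = Complex.exp (Complex.log a + Complex.log b - ((-(2*Real.pi) : ℝ):ℂ)*Complex.I) := by
      rw [Complex.exp_sub, Complex.exp_add, Complex.exp_log ha0, Complex.exp_log hb0]
      have h3 : Complex.exp (((-(2*Real.pi) : ℝ):ℂ)*Complex.I) = 1 := by
        push_cast
        rw [neg_mul, Complex.exp_neg, Complex.exp_two_pi_mul_I, inv_one]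
      rw [h3, div_one]
    rw [key, Complex.log_exp] <;>
      simp only [Complex.sub_im, Complex.add_im, Complex.log_im, Complex.mul_im,
        Complex.ofReal_re, Complex.ofReal_im, Complex.I_im, Complex.I_re,
        mul_one, mul_zero, zero_mul, add_zero, sub_zero, zero_add] <;>
      linarith

lemma csqrt_mul_cut {a b : ℂ} (ha : a.re < 0) (hb : b.re < 0) (hab : a.im = b.im) :
    csqrt a * csqrt b = -csqrt (a*b) := by
  have ha0 : a ≠ 0 := fun h => by simp [h] at ha
  have hb0 : b ≠ 0 := fun h => by simp [h] at hb
  obtain ⟨s, hs, hlog⟩ := log_mul_cut ha hb hab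
  unfold csqrt
  rw [Complex.cpow_def_of_ne_zero ha0, Complex.cpow_def_of_ne_zero hb0,
    Complex.cpow_def_of_ne_zero (mul_ne_zero ha0 hb0), hlog, ← Complex.exp_add]
  have hexp : Complex.exp (-((s:ℂ)*Complex.I*(1/2))) = -1 := by
    rcases hs with hs | hs <;> subst hs <;> push_cast
    · rw [show -(((2:ℂ)*(Real.pi:ℂ))*Complex.I*(1/2)) = -((Real.pi:ℂ)*Complex.I) by ring,
        Complex.exp_neg, Complex.exp_pi_mul_I]
      norm_num
    · rw [show -((-((2:ℂ)*(Real.pi:ℂ)))*Complex.I*(1/2)) = (Real.pi:ℂ)*Complex.I by ring,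
        Complex.exp_pi_mul_I]
  rw [show (Complex.log a + Complex.log b - (s:ℂ)*Complex.I) * (1/2)
      = Complex.log a * (1/2) + Complex.log b * (1/2) + -((s:ℂ)*Complex.I*(1/2)) by ring,
    Complex.exp_add, Complex.exp_add, hexp]
  rw [Complex.exp_add]
  ring

lemma cpow_neg_three_half_mul_cut {a b : ℂ} (ha : a.re < 0) (hb : b.re < 0) (hab : a.im = b.im) :
    (a*b) ^ (-(3:ℂ)/2) = -(a ^ (-(3:ℂ)/2) * b ^ (-(3:ℂ)/2)) := by
  have ha0 : a ≠ 0 := fun h => by simp [h] at ha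
  have hb0 : b ≠ 0 := fun h => by simp [h] at hb
  obtain ⟨s, hs, hlog⟩ := log_mul_cut ha hb hab
  rw [Complex.cpow_def_of_ne_zero ha0, Complex.cpow_def_of_ne_zero hb0,
    Complex.cpow_def_of_ne_zero (mul_ne_zero ha0 hb0), hlog, ← Complex.exp_add]
  have hexp : Complex.exp ((s:ℂ)*Complex.I*(3/2)) = -1 := by
    rcases hs with hs | hs <;> subst hs <;> push_cast
    · rw [show ((2:ℂ)*(Real.pi:ℂ))*Complex.I*(3/2) =
          (Real.pi:ℂ)*Complex.I + 2*(Real.pi:ℂ)*Complex.I by ring,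
        Complex.exp_add, Complex.exp_pi_mul_I, Complex.exp_two_pi_mul_I]
      norm_num
    · rw [show (-((2:ℂ)*(Real.pi:ℂ)))*Complex.I*(3/2) =
          -((Real.pi:ℂ)*Complex.I + 2*(Real.pi:ℂ)*Complex.I) by ring,
        Complex.exp_neg, Complex.exp_add, Complex.exp_pi_mul_I, Complex.exp_two_pi_mul_I]
      norm_num
  rw [show (Complex.log a + Complex.log b - (s:ℂ)*Complex.I) * (-(3:ℂ)/2)
      = Complex.log a * (-(3:ℂ)/2) + Complex.log b * (-(3:ℂ)/2) + (s:ℂ)*Complex.I*(3/2) by ring,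
    Complex.exp_add, Complex.exp_add, hexp]
  ring

theorem hasDerivAt_f (z : ℂ)
    (hz : ¬ (z.im = 0 ∧ z.re ∈ Set.Icc (-1 : ℝ) 1)) :
    HasDerivAt f (-((z + 1) ^ (-(3 : ℂ) / 2) * (z - 1) ^ (-(3 : ℂ) / 2))) z ∧
    -((z + 1) ^ (-(3 : ℂ) / 2) * (z - 1) ^ (-(3 : ℂ) / 2)) ≠ 0 := by
  have ha0 : z + 1 ≠ 0 := by
    intro h
    have h1 : z = -1 := by linear_combination h
    exact hz ⟨by simp [h1], by simp [h1]⟩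
  have hb0 : z - 1 ≠ 0 := by
    intro h
    have h1 : z = 1 := by linear_combination h
    exact hz ⟨by simp [h1], by simp [h1]⟩
  have hne : -((z + 1) ^ (-(3 : ℂ) / 2) * (z - 1) ^ (-(3 : ℂ) / 2)) ≠ 0 := by
    have h1 : (z + 1) ^ (-(3 : ℂ) / 2) ≠ 0 := by
      rw [Complex.cpow_def_of_ne_zero ha0]; exact Complex.exp_ne_zero _
    have h2 : (z - 1) ^ (-(3 : ℂ) / 2) ≠ 0 := by
      rw [Complex.cpow_def_of_ne_zero hb0]; exact Complex.exp_ne_zero _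
    exact neg_ne_zero.2 (mul_ne_zero h1 h2)
  refine ⟨?_, hne⟩
  by_cases hcut : z.im = 0 ∧ z.re < -1
  · -- on the left cut
    obtain ⟨him, hre⟩ := hcut
    have hp0 : (z*z - 1).re > 0 := by
      simp only [Complex.sub_re, Complex.mul_re, Complex.one_re, him]
      nlinarith
    have hpne : z*z - 1 ≠ 0 := fun h => by simp [h] at hp0
    -- derivative of g w = -(w * (w*w-1)^(-(1/2)))
    have hq : HasDerivAt (fun w : ℂ => w*w - 1) (1*z + z*1) z :=
      ((hasDerivAt_id z).mul (hasDerivAt_id z)).sub_const 1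
    have h2 := hq.cpow_const (c := -(1:ℂ)/2) (Or.inl hp0)
    have h3 := ((hasDerivAt_id z).mul h2).neg
    have hgoal : HasDerivAt (fun w : ℂ => -(w * (w*w - 1) ^ (-(1:ℂ)/2)))
        ((z*z - 1) ^ (-(3:ℂ)/2)) z := by
      refine HasDerivAt.congr_deriv h3 ?_
      have e1 : (-(1:ℂ)/2 - 1) = -(3:ℂ)/2 := by norm_num
      have e2 : (z*z - 1) ^ (-(1:ℂ)/2) = (z*z - 1) ^ (-(3:ℂ)/2) * (z*z - 1) := by
        rw [show (-(1:ℂ)/2) = -(3:ℂ)/2 + 1 by norm_num, Complex.cpow_add _ _ hpne,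
          Complex.cpow_one]
      rw [e1, e2]
      simp only [id_eq]
      ring
    -- f agrees with g near z
    have hmem : z ∈ {w : ℂ | w.re < -1} := hre
    have hopen : IsOpen {w : ℂ | w.re < -1} := isOpen_lt Complex.continuous_re continuous_const
    have hev : f =ᶠ[nhds z] (fun w : ℂ => -(w * (w*w - 1) ^ (-(1:ℂ)/2))) := by
      filter_upwards [hopen.mem_nhds hmem] with w hw
      have hw : w.re < -1 := hw
      have hra : (w + 1).re < 0 := by simp [Complex.add_re]; linarith
      have hrb : (w - 1).re < 0 := by simp [Complex.sub_re]; linarith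
      have hieq : (w + 1).im = (w - 1).im := by simp
      have hkey := csqrt_mul_cut hra hrb hieq
      have hmul : (w + 1) * (w - 1) = w*w - 1 := by ring
      rw [hmul] at hkey
      show w / (csqrt (w + 1) * csqrt (w - 1)) = _
      rw [hkey]
      unfold csqrt
      rw [show (-(1:ℂ)/2) = -((1:ℂ)/2) by norm_num, Complex.cpow_neg, div_neg, div_eq_mul_inv]
    have hf : HasDerivAt f ((z*z - 1) ^ (-(3:ℂ)/2)) z := hgoal.congr_of_eventuallyEq hev
    have hra : (z + 1).re < 0 := by simp [Complex.add_re]; linarith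
    have hrb : (z - 1).re < 0 := by simp [Complex.sub_re]; linarith
    have hieq : (z + 1).im = (z - 1).im := by simp
    have hkey := cpow_neg_three_half_mul_cut hra hrb hieq
    have hmul : (z + 1) * (z - 1) = z*z - 1 := by ring
    rw [hmul] at hkey
    rw [← hkey]
    exact hf
  · -- away from the cut: both z+1 and z-1 lie in the slit plane
    have hslit1 : z + 1 ∈ Complex.slitPlane := by
      rw [Complex.mem_slitPlane_iff]
      by_cases him : z.im = 0
      · left
        have hre : ¬ z.re < -1 := fun h => hcut ⟨him, h⟩
        have hre2 : ¬ (z.re ∈ Set.Icc (-1:ℝ) 1) := fun h => hz ⟨him, h⟩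
        rw [Set.mem_Icc] at hre2
        push_neg at hre hre2
        simp only [Complex.add_re, Complex.one_re]
        have := hre2 hre
        linarith
      · right; simpa using him
    have hslit2 : z - 1 ∈ Complex.slitPlane := by
      rw [Complex.mem_slitPlane_iff]
      by_cases him : z.im = 0
      · left
        have hre : ¬ z.re < -1 := fun h => hcut ⟨him, h⟩
        have hre2 : ¬ (z.re ∈ Set.Icc (-1:ℝ) 1) := fun h => hz ⟨him, h⟩
        rw [Set.mem_Icc] at hre2
        push_neg at hre hre2
        simp only [Complex.sub_re, Complex.one_re]
        have := hre2 hre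
        linarith
      · right; simpa using him
    have hu0 : csqrt (z + 1) ≠ 0 := by
      unfold csqrt; rw [Complex.cpow_def_of_ne_zero ha0]; exact Complex.exp_ne_zero _
    have hv0 : csqrt (z - 1) ≠ 0 := by
      unfold csqrt; rw [Complex.cpow_def_of_ne_zero hb0]; exact Complex.exp_ne_zero _
    have hu2 : csqrt (z + 1) * csqrt (z + 1) = z + 1 := by
      unfold csqrt; rw [← Complex.cpow_add _ _ ha0]; norm_num
    have hv2 : csqrt (z - 1) * csqrt (z - 1) = z - 1 := by
      unfold csqrt; rw [← Complex.cpow_add _ _ hb0]; norm_num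
    have h1 : HasDerivAt (fun w : ℂ => csqrt (w + 1))
        ((1:ℂ)/2 * (z + 1) ^ ((1:ℂ)/2 - 1) * 1) z := by
      have := ((hasDerivAt_id z).add_const (1:ℂ)).cpow_const (c := (1:ℂ)/2) hslit1
      simpa [csqrt] using this
    have h2 : HasDerivAt (fun w : ℂ => csqrt (w - 1))
        ((1:ℂ)/2 * (z - 1) ^ ((1:ℂ)/2 - 1) * 1) z := by
      have := ((hasDerivAt_id z).sub_const (1:ℂ)).cpow_const (c := (1:ℂ)/2) hslit2
      simpa [csqrt] using this
    have hdiv := (hasDerivAt_id z).div (h1.mul h2) (mul_ne_zero hu0 hv0)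
    have heq : ((1:ℂ) * (csqrt (z + 1) * csqrt (z - 1)) -
        z * (((1:ℂ)/2 * (z + 1) ^ ((1:ℂ)/2 - 1) * 1) * csqrt (z - 1) +
          csqrt (z + 1) * ((1:ℂ)/2 * (z - 1) ^ ((1:ℂ)/2 - 1) * 1))) /
        (csqrt (z + 1) * csqrt (z - 1)) ^ 2
        = -((z + 1) ^ (-(3 : ℂ) / 2) * (z - 1) ^ (-(3 : ℂ) / 2)) := by
      have ea : (z + 1) ^ ((1:ℂ)/2 - 1) = (csqrt (z + 1))⁻¹ := by
        rw [show ((1:ℂ)/2 - 1) = -((1:ℂ)/2) by norm_num, Complex.cpow_neg]; rfl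
      have eb : (z - 1) ^ ((1:ℂ)/2 - 1) = (csqrt (z - 1))⁻¹ := by
        rw [show ((1:ℂ)/2 - 1) = -((1:ℂ)/2) by norm_num, Complex.cpow_neg]; rfl
      have ea3 : (z + 1) ^ (-(3:ℂ)/2) = (csqrt (z + 1) * (z + 1))⁻¹ := by
        rw [show (-(3:ℂ)/2) = -((1:ℂ)/2 + 1) by norm_num, Complex.cpow_neg,
          Complex.cpow_add _ _ ha0, Complex.cpow_one]; rfl
      have eb3 : (z - 1) ^ (-(3:ℂ)/2) = (csqrt (z - 1) * (z - 1))⁻¹ := by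
        rw [show (-(3:ℂ)/2) = -((1:ℂ)/2 + 1) by norm_num, Complex.cpow_neg,
          Complex.cpow_add _ _ hb0, Complex.cpow_one]; rfl
      rw [ea, eb, ea3, eb3]
      set u := csqrt (z + 1) with hu
      set v := csqrt (z - 1) with hv
      clear_value u v
      field_simp
      ring_nf
      linear_combination (2*v^2*z^2 + z - z^3) * hu2 +
        (2*(z+1)*z^2 + z - z^3) * hv2
    have : HasDerivAt f (-((z + 1) ^ (-(3 : ℂ) / 2) * (z - 1) ^ (-(3 : ℂ) / 2))) z := by
      rw [← heq]
      exact hdiv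
    exact this
end

section
/- For real t = √(√5 − 2) > 0, one has x(t)² = 1 where x(t)² := [ (1+t²)·√(4+t²) + 3t + t³ ] / (2t(4+t²)); i.e., the curve crosses the vertical line Re w = 1 at t = √(√5 − 2). -/
theorem crossing_point :
    let t : ℝ := Real.sqrt (Real.sqrt 5 - 2)
    ((1 + t ^ 2) * Real.sqrt (4 + t ^ 2) + 3 * t + t ^ 3) / (2 * t * (4 + t ^ 2)) = 1 := by
  intro t
  have hs : Real.sqrt 5 ^ 2 = 5 := Real.sq_sqrt (by norm_num)
  have hs2 : 2 < Real.sqrt 5 := by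
    nlinarith [Real.sqrt_nonneg 5, hs]
  have ht2 : t ^ 2 = Real.sqrt 5 - 2 := Real.sq_sqrt (by linarith)
  have ht0 : 0 < t := Real.sqrt_pos.mpr (by linarith)
  have h4 : (4 : ℝ) + t ^ 2 = 2 + Real.sqrt 5 := by linarith
  have hr : Real.sqrt (4 + t ^ 2) = Real.sqrt (2 + Real.sqrt 5) := by rw [h4]
  have hkey : (Real.sqrt 5 - 1) * Real.sqrt (2 + Real.sqrt 5) = t * (3 + Real.sqrt 5) := by
    have h1 : Real.sqrt (2 + Real.sqrt 5) ^ 2 = 2 + Real.sqrt 5 :=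
      Real.sq_sqrt (by linarith)
    have h2 : 0 ≤ Real.sqrt (2 + Real.sqrt 5) := Real.sqrt_nonneg _
    have hsq : ((Real.sqrt 5 - 1) * Real.sqrt (2 + Real.sqrt 5)) ^ 2
        = (t * (3 + Real.sqrt 5)) ^ 2 := by
      rw [mul_pow, mul_pow, h1, ht2]
      linear_combination (-4 : ℝ) * hs
    exact (sq_eq_sq₀ (mul_nonneg (by linarith) h2)
      (mul_nonneg ht0.le (by linarith))).mp hsq
  rw [hr, div_eq_one_iff_eq (by nlinarith)]
  nlinarith [hkey, ht2]
end
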